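/- Let (R, m) be a Cohen-Macaulay local ring of dimension one, I a regular ideal of R, and a ∈ I such that the principal ideal (a) is a reduction of I. Then the integral closures of the ideals I and (a) coincide, and both equal aR̄ ∩ R and IR̄ ∩ R, where R̄ is the integral closure of R in its total quotient ring Q(R) (here IR̄ denotes the R̄-submodule of Q(R) generated by I). That is: Ī = \overline{(a)} = aR̄ ∩ R = IR̄ ∩ R. -/

import Mathlib

theorem my_isIntegral_of_smul_mem_submodule {R A M : Type*} [CommRing R] [CommRing A]
    [Algebra R A] [AddCommGroup M] [Module R M] [Module A M] [IsScalarTower R A M]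
    (N : Submodule R M) (hN' : N.FG)
    (w : M) (hw : w ∈ N) (hwf : ∀ s : A, s • w = 0 → s = 0)
    (x : A) (hx : ∀ n ∈ N, x • n ∈ N) : IsIntegral R x := by
  let A' : Subalgebra R A :=
    { carrier := { x | ∀ n ∈ N, x • n ∈ N }
      mul_mem' := fun {a b} ha hb n hn => smul_smul a b n ▸ ha _ (hb _ hn)
      one_mem' := fun n hn => (one_smul A n).symm ▸ hn
      add_mem' := fun {a b} ha hb n hn => (add_smul a b n).symm ▸ N.add_mem (ha _ hn) (hb _ hn)
      zero_mem' := fun n _hn => (zero_smul A n).symm ▸ N.zero_mem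
      algebraMap_mem' := fun r n hn => (algebraMap_smul A r n).symm ▸ N.smul_mem r hn }
  let f : A' →ₐ[R] Module.End R N :=
    AlgHom.ofLinearMap
      { toFun := fun x => (DistribMulAction.toLinearMap R M x).restrict x.prop
        map_add' := by intros x y; ext; exact add_smul _ _ _
        map_smul' := by intros r s; ext; apply smul_assoc }
      (by ext; apply one_smul)
      (by intros x y; ext; apply mul_smul)
  have hinj : Function.Injective f := by
    show Function.Injective f.toLinearMap
    rw [← LinearMap.ker_eq_bot, eq_bot_iff]
    intro s hs
    have : s.1 • w = 0 := congr_arg Subtype.val (LinearMap.congr_fun hs ⟨w, hw⟩)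
    exact Subtype.ext (hwf _ this)
  show IsIntegral R (A'.val ⟨x, hx⟩)
  rw [isIntegral_algHom_iff A'.val Subtype.val_injective, ← isIntegral_algHom_iff f hinj]
  haveI : Module.Finite R N := by rwa [Module.finite_def, Submodule.fg_top]
  apply Algebra.IsIntegral.isIntegral

lemma my_sum_Icc_eq_sum_range {M : Type*} [AddCommMonoid M] (m : ℕ) (g : ℕ → M) :
    ∑ i ∈ Finset.Icc 1 m, g (m - i) = ∑ j ∈ Finset.range m, g j := by
  refine Finset.sum_nbij' (fun i => m - i) (fun j => m - j) ?_ ?_ ?_ ?_ ?_ <;>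
    intros <;> simp_all [Finset.mem_Icc, Finset.mem_range] <;> omega


/-- `x` lies in the integral closure of the ideal `I`: there is an equation
`x ^ n + a 1 * x ^ (n-1) + ⋯ + a n = 0` with `n ≥ 1` and `a i ∈ I ^ i`. -/
def MemIdealIntegralClosure {R : Type*} [CommRing R] (I : Ideal R) (x : R) : Prop :=
  ∃ n : ℕ, 0 < n ∧ ∃ a : ℕ → R, (∀ i ∈ Finset.Icc 1 n, a i ∈ I ^ i) ∧
    x ^ n + ∑ i ∈ Finset.Icc 1 n, a i * x ^ (n - i) = 0

/-- Let `(R, m)` be a one-dimensional Cohen-Macaulay local ring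
(Noetherian local with `dim R = 1` and `m` containing a non-zerodivisor), `I` a regular
ideal and `a ∈ I` such that `(a)` is a reduction of `I`.  Then the integral closures of the
ideals `I` and `(a)` coincide and both equal `aR̄ ∩ R` and `IR̄ ∩ R`, where `R̄` is the
integral closure of `R` in its total quotient ring `Q(R)`. -/
theorem stmt5 (R : Type*) [CommRing R] [IsNoetherianRing R] [IsLocalRing R]
    (hdim : ringKrullDim R = 1)
    (hdepth : ∃ x ∈ IsLocalRing.maximalIdeal R, x ∈ nonZeroDivisors R)
    (I : Ideal R) (hreg : ∃ x ∈ I, x ∈ nonZeroDivisors R)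
    (a : R) (ha : a ∈ I)
    (hred : ∃ n : ℕ, 0 < n ∧ I ^ (n + 1) = Ideal.span {a} * I ^ n) :
    ∀ x : R,
      (MemIdealIntegralClosure I x ↔ MemIdealIntegralClosure (Ideal.span {a}) x) ∧
      (MemIdealIntegralClosure I x ↔
        ∃ y ∈ integralClosure R (FractionRing R),
          algebraMap R (FractionRing R) x = algebraMap R (FractionRing R) a * y) ∧
      (MemIdealIntegralClosure I x ↔
        algebraMap R (FractionRing R) x ∈
          Submodule.span ↥(integralClosure R (FractionRing R))
            (algebraMap R (FractionRing R) '' I)) := by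
  classical
  obtain ⟨t, htI, htreg⟩ := hreg
  obtain ⟨n, hn, hIn⟩ := hred
  set K := FractionRing R with hK
  let f : R →+* K := algebraMap R K
  have hfinj : Function.Injective f := IsFractionRing.injective R K
  -- a is a non-zero-divisor
  have hareg : a ∈ nonZeroDivisors R := by
    have h1 : t ^ (n + 1) ∈ Ideal.span {a} * I ^ n := by
      rw [← hIn]; exact Ideal.pow_mem_pow htI (n + 1)
    obtain ⟨c, hc, hac⟩ := Ideal.mem_span_singleton_mul.mp h1
    have h2 : a * c ∈ nonZeroDivisors R := hac ▸ pow_mem htreg (n + 1)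
    exact (mul_mem_nonZeroDivisors.mp h2).1
  obtain ⟨v, hv⟩ : ∃ v : K, f a * v = 1 :=
    (isUnit_iff_exists_inv.mp (IsLocalization.map_units K (⟨a, hareg⟩ : nonZeroDivisors R)))
  -- key 1 : for x ∈ I, v * f x is integral over R
  have key1 : ∀ x ∈ I, v * f x ∈ integralClosure R K := by
    intro x hx
    have hNfg : (Submodule.map (Algebra.linearMap R K) (I ^ n)).FG :=
      (IsNoetherian.noetherian (I ^ n)).map _
    have hw : f (t ^ n) ∈ Submodule.map (Algebra.linearMap R K) (I ^ n) :=
      Submodule.mem_map_of_mem (Ideal.pow_mem_pow htI n)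
    have hwf : ∀ s : K, s • f (t ^ n) = 0 → s = 0 := by
      intro s hs
      obtain ⟨w, hw'⟩ := isUnit_iff_exists_inv.mp
        (IsLocalization.map_units K (⟨t ^ n, pow_mem htreg n⟩ : nonZeroDivisors R))
      have : s * f (t ^ n) = 0 := hs
      calc s = s * (f (t ^ n) * w) := by rw [hw', mul_one]
        _ = (s * f (t ^ n)) * w := by ring
        _ = 0 := by rw [this, zero_mul]
    refine my_isIntegral_of_smul_mem_submodule _ hNfg _ hw hwf _ ?_
    rintro m hm
    obtain ⟨b, hb, rfl⟩ := hm
    have hxb : x * b ∈ Ideal.span {a} * I ^ n := by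
      rw [← hIn, pow_succ, mul_comm x b]
      exact Ideal.mul_mem_mul hb hx
    obtain ⟨c, hc, hac⟩ := Ideal.mem_span_singleton_mul.mp hxb
    have heq : (v * f x) • (Algebra.linearMap R K b) = f c := by
      show (v * f x) * f b = f c
      calc (v * f x) * f b = v * f (x * b) := by rw [map_mul]; ring
        _ = v * (f a * f c) := by rw [← hac, map_mul]
        _ = (f a * v) * f c := by ring
        _ = f c := by rw [hv, one_mul]
    rw [heq]
    exact Submodule.mem_map_of_mem hc
  -- key 2 : for b ∈ I ^ i, v ^ i * f b is integral over R
  have key2 : ∀ i : ℕ, ∀ b ∈ I ^ i, v ^ i * f b ∈ integralClosure R K := by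
    intro i
    induction i with
    | zero =>
      intro b _
      simp only [pow_zero, one_mul]
      exact (isIntegral_algebraMap : IsIntegral R (algebraMap R K b))
    | succ i ih =>
      intro b hb
      rw [pow_succ] at hb
      refine Submodule.mul_induction_on hb ?_ ?_
      · intro m hm c hc
        have hmem := mul_mem (ih m hm) (key1 c hc)
        have : v ^ (i + 1) * f (m * c) = (v ^ i * f m) * (v * f c) := by
          rw [map_mul, pow_succ]; ring
        rw [this]; exact hmem
      · intro p q hp hq
        have : v ^ (i + 1) * f (p + q) = v ^ (i + 1) * f p + v ^ (i + 1) * f q := by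
          rw [map_add]; ring
        rw [this]; exact add_mem hp hq
  -- P1 → P3
  have P1P3 : ∀ x : R, MemIdealIntegralClosure I x →
      ∃ y ∈ integralClosure R K, f x = f a * y := by
    rintro x ⟨m, hm, c, hc, heq⟩
    set z := v * f x with hz
    have hzeq : z ^ m + ∑ i ∈ Finset.Icc 1 m, (v ^ i * f (c i)) * z ^ (m - i) = 0 := by
      have h0 : f (x ^ m + ∑ i ∈ Finset.Icc 1 m, c i * x ^ (m - i)) = 0 := by
        rw [heq, map_zero]
      have h1 : (f x) ^ m + ∑ i ∈ Finset.Icc 1 m, f (c i) * (f x) ^ (m - i) = 0 := by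
        simpa [map_add, map_sum, map_mul, map_pow] using h0
      have h2 : v ^ m * ((f x) ^ m + ∑ i ∈ Finset.Icc 1 m, f (c i) * (f x) ^ (m - i)) = 0 := by
        rw [h1, mul_zero]
      rw [mul_add, Finset.mul_sum] at h2
      rw [← h2]
      congr 1
      · rw [hz]; ring
      · refine Finset.sum_congr rfl fun i hi => ?_
        simp only [Finset.mem_Icc] at hi
        have him : i + (m - i) = m := by omega
        rw [hz, mul_pow]
        calc v ^ i * f (c i) * (v ^ (m - i) * (f x) ^ (m - i))
            = (v ^ i * v ^ (m - i)) * (f (c i) * (f x) ^ (m - i)) := by ring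
          _ = v ^ m * (f (c i) * (f x) ^ (m - i)) := by rw [← pow_add, him]
    -- build a monic polynomial over S := integralClosure R K
    set S := integralClosure R K with hS
    let sc : ℕ → S := fun i =>
      if h : i ∈ Finset.Icc 1 m then ⟨v ^ i * f (c i), key2 i _ (hc i h)⟩ else 0
    let p : Polynomial S :=
      Polynomial.X ^ m + ∑ i ∈ Finset.Icc 1 m, Polynomial.C (sc i) * Polynomial.X ^ (m - i)
    have hdeg : (∑ i ∈ Finset.Icc 1 m, Polynomial.C (sc i) * Polynomial.X ^ (m - i)).degree
        < (m : WithBot ℕ) := by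
      refine lt_of_le_of_lt (Polynomial.degree_sum_le _ _) ?_
      rw [Finset.sup_lt_iff (by exact_mod_cast WithBot.bot_lt_coe m)]
      intro i hi
      refine lt_of_le_of_lt (Polynomial.degree_C_mul_X_pow_le _ _) ?_
      simp only [Finset.mem_Icc] at hi
      exact_mod_cast Nat.lt_of_lt_of_le (by omega : m - i < m) le_rfl
    have hpmonic : p.Monic := Polynomial.monic_X_pow_add hdeg
    have hpeval : Polynomial.eval₂ (algebraMap S K) z p = 0 := by
      simp only [p, Polynomial.eval₂_add, Polynomial.eval₂_pow, Polynomial.eval₂_X,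
        Polynomial.eval₂_finset_sum, Polynomial.eval₂_mul, Polynomial.eval₂_C]
      rw [← hzeq]
      congr 1
      refine Finset.sum_congr rfl fun i hi => ?_
      simp only [sc, dif_pos hi]
      rfl
    have hzS : IsIntegral S z := ⟨p, hpmonic, hpeval⟩
    have hzint : IsIntegral R z := isIntegral_trans z hzS
    refine ⟨z, hzint, ?_⟩
    rw [hz, ← mul_assoc, hv, one_mul]
  -- P3 → P2
  have P3P2 : ∀ x : R, (∃ y ∈ integralClosure R K, f x = f a * y) →
      MemIdealIntegralClosure (Ideal.span {a}) x := by
    rintro x ⟨y, hy, hxy⟩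
    obtain ⟨p0, hp0monic, hp0eval⟩ := (hy : IsIntegral R y)
    set q := p0 * Polynomial.X with hq
    have hqmonic : q.Monic := hp0monic.mul Polynomial.monic_X
    have hqeval : Polynomial.eval₂ f y q = 0 := by
      rw [hq, Polynomial.eval₂_mul, hp0eval, zero_mul]
    set m := q.natDegree with hmdef
    have hm : 0 < m := by
      rw [hmdef, hq, hp0monic.natDegree_mul Polynomial.monic_X, Polynomial.natDegree_X]
      omega
    refine ⟨m, hm, fun i => q.coeff (m - i) * a ^ i, ?_, ?_⟩
    · intro i hi
      rw [Ideal.span_singleton_pow, Ideal.mem_span_singleton]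
      exact ⟨q.coeff (m - i), mul_comm _ _⟩
    · apply hfinj
      rw [map_zero, map_add, map_pow, map_sum]
      have hterm : ∀ i ∈ Finset.Icc 1 m,
          f (q.coeff (m - i) * a ^ i * x ^ (m - i))
            = (f a) ^ m * (f (q.coeff (m - i)) * y ^ (m - i)) := by
        intro i hi
        simp only [Finset.mem_Icc] at hi
        have him : i + (m - i) = m := by omega
        rw [map_mul, map_mul, map_pow, map_pow, hxy, mul_pow]
        calc f (q.coeff (m - i)) * (f a) ^ i * ((f a) ^ (m - i) * y ^ (m - i))
            = ((f a) ^ i * (f a) ^ (m - i)) * (f (q.coeff (m - i)) * y ^ (m - i)) := by ring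
          _ = (f a) ^ m * (f (q.coeff (m - i)) * y ^ (m - i)) := by rw [← pow_add, him]
      rw [Finset.sum_congr rfl hterm, ← Finset.mul_sum, hxy, mul_pow]
      have hsum : ∑ i ∈ Finset.Icc 1 m, f (q.coeff (m - i)) * y ^ (m - i)
          = ∑ j ∈ Finset.range m, f (q.coeff j) * y ^ j :=
        my_sum_Icc_eq_sum_range m (fun j => f (q.coeff j) * y ^ j)
      have heval : Polynomial.eval₂ f y q
          = y ^ m + ∑ j ∈ Finset.range m, f (q.coeff j) * y ^ j := by
        rw [Polynomial.eval₂_eq_sum_range, Finset.sum_range_succ, hqmonic.coeff_natDegree,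
          map_one, one_mul, add_comm]
      calc (f a) ^ m * y ^ m + (f a) ^ m * ∑ i ∈ Finset.Icc 1 m, f (q.coeff (m - i)) * y ^ (m - i)
          = (f a) ^ m * (y ^ m + ∑ j ∈ Finset.range m, f (q.coeff j) * y ^ j) := by
            rw [hsum]; ring
        _ = (f a) ^ m * Polynomial.eval₂ f y q := by rw [heval]
        _ = 0 := by rw [hqeval, mul_zero]
  -- P2 → P1
  have P2P1 : ∀ x : R, MemIdealIntegralClosure (Ideal.span {a}) x →
      MemIdealIntegralClosure I x := by
    rintro x ⟨m, hm, c, hc, heq⟩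
    exact ⟨m, hm, c, fun i hi =>
      Ideal.pow_right_mono ((Ideal.span_singleton_le_iff_mem I).mpr ha) i (hc i hi), heq⟩
  -- P3 → P4
  have P3P4 : ∀ x : R, (∃ y ∈ integralClosure R K, f x = f a * y) →
      f x ∈ Submodule.span ↥(integralClosure R K) (f '' I) := by
    rintro x ⟨y, hy, hxy⟩
    have h1 : f a ∈ Submodule.span ↥(integralClosure R K) (f '' I) :=
      Submodule.subset_span ⟨a, ha, rfl⟩
    have h2 := Submodule.smul_mem _ (⟨y, hy⟩ : integralClosure R K) h1
    rw [Algebra.smul_def] at h2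
    have : (algebraMap ↥(integralClosure R K) K) (⟨y, hy⟩ : integralClosure R K) = y := rfl
    rw [this] at h2
    rw [hxy, mul_comm]
    exact h2
  -- P4 → P3
  have P4P3 : ∀ x : R, f x ∈ Submodule.span ↥(integralClosure R K) (f '' I) →
      ∃ y ∈ integralClosure R K, f x = f a * y := by
    intro x hx
    have hspan : Submodule.span ↥(integralClosure R K) (f '' I)
        ≤ Submodule.span ↥(integralClosure R K) {f a} := by
      rw [Submodule.span_le]
      rintro _ ⟨b, hb, rfl⟩
      rw [SetLike.mem_coe, Submodule.mem_span_singleton]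
      refine ⟨⟨v * f b, key1 b hb⟩, ?_⟩
      show (v * f b) * f a = f b
      calc (v * f b) * f a = (f a * v) * f b := by ring
        _ = f b := by rw [hv, one_mul]
    obtain ⟨s, hs⟩ := Submodule.mem_span_singleton.mp (hspan hx)
    refine ⟨s.1, s.2, ?_⟩
    rw [← hs]
    show s.1 * f a = f a * s.1
    ring
  intro x
  exact ⟨⟨fun h => P3P2 x (P1P3 x h), fun h => P2P1 x h⟩,
         ⟨fun h => P1P3 x h, fun h => P2P1 x (P3P2 x h)⟩,
         ⟨fun h => P3P4 x (P1P3 x h), fun h => P2P1 x (P3P2 x (P4P3 x h))⟩⟩
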